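/- Let L_i = ⟨(η_i, ξ_i); T_i, I_i, F_i⟩ for i = 1,…,n be FNNNs with η_i, ξ_i > 0 and ω_i ≥ 0, Σω_i = 1. Define L^{ω} = ⟨(η^{ω}, ξ^{ω}); T^{ω}, (1-(1-I^{Λ})^{ω})^{1/Λ}, (1-(1-F^{3Λ})^{ω})^{1/(3Λ)}⟩ and product L₁ ⊠ L₂ = ⟨(η₁η₂, ξ₁ξ₂); T₁T₂, (I₁^{Λ}+I₂^{Λ}-I₁^{Λ}I₂^{Λ})^{1/Λ}, (F₁^{3Λ}+F₂^{3Λ}-F₁^{3Λ}F₂^{3Λ})^{1/(3Λ)}⟩. Then Πᵢ L_i^{ω_i} = ⟨(Π η_i^{ω_i}, Π ξ_i^{ω_i}); Π T_i^{ω_i}, (1 - Πᵢ(1-I_i^{Λ})^{ω_i})^{1/Λ}, (1 - Πᵢ(1-F_i^{3Λ})^{ω_i})^{1/(3Λ)}⟩. -/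

import Mathlib

structure FNNN where
  eta : ℝ
  xi : ℝ
  T : ℝ
  I : ℝ
  F : ℝ

noncomputable def FNNN.mul (Λ : ℕ) (L₁ L₂ : FNNN) : FNNN :=
  ⟨L₁.eta * L₂.eta, L₁.xi * L₂.xi,
    L₁.T * L₂.T,
    (L₁.I ^ Λ + L₂.I ^ Λ - L₁.I ^ Λ * L₂.I ^ Λ) ^ (1 / (Λ:ℝ)),
    (L₁.F ^ (3*Λ) + L₂.F ^ (3*Λ) - L₁.F ^ (3*Λ) * L₂.F ^ (3*Λ)) ^ (1 / (3 * (Λ:ℝ)))⟩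

noncomputable def FNNN.wpow (Λ : ℕ) (w : ℝ) (L : FNNN) : FNNN :=
  ⟨L.eta ^ w, L.xi ^ w,
    L.T ^ w,
    (1 - (1 - L.I ^ Λ) ^ w) ^ (1 / (Λ:ℝ)),
    (1 - (1 - L.F ^ (3*Λ)) ^ w) ^ (1 / (3 * (Λ:ℝ)))⟩

private lemma rpow_inv_natpow (x : ℝ) (hx : 0 ≤ x) (m : ℕ) (hm : m ≠ 0) :
    (x ^ (1/(m:ℝ))) ^ m = x := by
  rw [← Real.rpow_natCast (x ^ (1/(m:ℝ))) m, ← Real.rpow_mul hx,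
    one_div, inv_mul_cancel₀ (by exact_mod_cast hm), Real.rpow_one]

private lemma fnnn_step (Λ : ℕ) (hΛ : 0 < Λ) (E X Tv e x t A a B b : ℝ)
    (hA0 : 0 ≤ A) (hA1 : A ≤ 1) (ha0 : 0 ≤ a) (ha1 : a ≤ 1)
    (hB0 : 0 ≤ B) (hB1 : B ≤ 1) (hb0 : 0 ≤ b) (hb1 : b ≤ 1) :
    FNNN.mul Λ ⟨E, X, Tv, (1-A)^(1/(Λ:ℝ)), (1-B)^(1/(3*(Λ:ℝ)))⟩
      ⟨e, x, t, (1-a)^(1/(Λ:ℝ)), (1-b)^(1/(3*(Λ:ℝ)))⟩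
    = ⟨E*e, X*x, Tv*t, (1-A*a)^(1/(Λ:ℝ)), (1-B*b)^(1/(3*(Λ:ℝ)))⟩ := by
  have h3 : (1/(3*(Λ:ℝ))) = 1/(((3*Λ : ℕ)):ℝ) := by push_cast; ring
  simp only [FNNN.mul, FNNN.mk.injEq]
  refine ⟨trivial, trivial, trivial, ?_, ?_⟩
  · rw [rpow_inv_natpow _ (by linarith) Λ hΛ.ne',
      rpow_inv_natpow _ (by linarith) Λ hΛ.ne']
    congr 1; ring
  · rw [h3, rpow_inv_natpow _ (by linarith) (3*Λ) (by omega),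
      rpow_inv_natpow _ (by linarith) (3*Λ) (by omega)]
    congr 1; ring

private lemma mem01 (y w : ℝ) (hy : y ∈ Set.Icc (0:ℝ) 1) (hw : 0 ≤ w) (m : ℕ) :
    (1 - y ^ m) ^ w ∈ Set.Icc (0:ℝ) 1 := by
  have h1 : y ^ m ≤ 1 := pow_le_one₀ hy.1 hy.2
  have h0 : 0 ≤ y ^ m := pow_nonneg hy.1 m
  exact ⟨Real.rpow_nonneg (by linarith) w, Real.rpow_le_one (by linarith) (by linarith) hw⟩

private lemma fnnwg_aux (Λ : ℕ) (hΛ : 0 < Λ) :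
    ∀ (n : ℕ) (L : Fin (n+1) → FNNN) (ω : Fin (n+1) → ℝ),
    (∀ i, (L i).I ∈ Set.Icc (0:ℝ) 1) → (∀ i, (L i).F ∈ Set.Icc (0:ℝ) 1) →
    (∀ i, 0 ≤ ω i) →
    (List.ofFn (fun i : Fin n => FNNN.wpow Λ (ω i.succ) (L i.succ))).foldl
        (FNNN.mul Λ) (FNNN.wpow Λ (ω 0) (L 0))
      = ⟨∏ i, (L i).eta ^ (ω i), ∏ i, (L i).xi ^ (ω i),
          ∏ i, (L i).T ^ (ω i),
          (1 - ∏ i, (1 - (L i).I ^ Λ) ^ (ω i)) ^ (1 / (Λ:ℝ)),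
          (1 - ∏ i, (1 - (L i).F ^ (3*Λ)) ^ (ω i)) ^ (1 / (3 * (Λ:ℝ)))⟩ := by
  intro n
  induction n with
  | zero =>
    intro L ω hI hF hω
    simp [FNNN.wpow]
  | succ n ih =>
    intro L ω hI hF hω
    rw [List.ofFn_succ']
    simp only [List.concat_eq_append, List.foldl_append, List.foldl_cons, List.foldl_nil]
    have e1 : (fun i : Fin n => FNNN.wpow Λ (ω (i.castSucc).succ) (L (i.castSucc).succ))
        = (fun i : Fin n => FNNN.wpow Λ ((ω ∘ Fin.castSucc) i.succ) ((L ∘ Fin.castSucc) i.succ)) := by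
      funext i; simp [Function.comp, Fin.succ_castSucc, -Fin.castSucc_succ]
    have e2 : FNNN.wpow Λ (ω 0) (L 0)
        = FNNN.wpow Λ ((ω ∘ Fin.castSucc) 0) ((L ∘ Fin.castSucc) 0) := by
      simp [Function.comp]
    simp only [Fin.succ_castSucc]
    rw [show (fun i : Fin n => FNNN.wpow Λ (ω (i.succ).castSucc) (L (i.succ).castSucc))
        = (fun i : Fin n => FNNN.wpow Λ ((ω ∘ Fin.castSucc) i.succ) ((L ∘ Fin.castSucc) i.succ))
        from by funext i; rfl, e2,
      ih (L ∘ Fin.castSucc) (ω ∘ Fin.castSucc) (fun i => hI _) (fun i => hF _) (fun i => hω _)]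
    have hIprodI : (∏ i, (1 - ((L ∘ Fin.castSucc) i).I ^ Λ) ^ ((ω ∘ Fin.castSucc) i)) ∈ Set.Icc (0:ℝ) 1 := by
      constructor
      · exact Finset.prod_nonneg fun i _ => (mem01 _ _ (hI _) (hω _) Λ).1
      · exact Finset.prod_le_one (fun i _ => (mem01 _ _ (hI _) (hω _) Λ).1)
          (fun i _ => (mem01 _ _ (hI _) (hω _) Λ).2)
    have hFprodF : (∏ i, (1 - ((L ∘ Fin.castSucc) i).F ^ (3*Λ)) ^ ((ω ∘ Fin.castSucc) i)) ∈ Set.Icc (0:ℝ) 1 := by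
      constructor
      · exact Finset.prod_nonneg fun i _ => (mem01 _ _ (hF _) (hω _) (3*Λ)).1
      · exact Finset.prod_le_one (fun i _ => (mem01 _ _ (hF _) (hω _) (3*Λ)).1)
          (fun i _ => (mem01 _ _ (hF _) (hω _) (3*Λ)).2)
    have hIn := mem01 _ _ (hI (Fin.last n).succ) (hω (Fin.last n).succ) Λ
    have hFn := mem01 _ _ (hF (Fin.last n).succ) (hω (Fin.last n).succ) (3*Λ)
    simp only [FNNN.wpow]
    rw [fnnn_step Λ hΛ _ _ _ _ _ _ _ _ _ _ hIprodI.1 hIprodI.2 hIn.1 hIn.2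
      hFprodF.1 hFprodF.2 hFn.1 hFn.2]
    simp only [Function.comp, Fin.succ_last]
    simp only [Fin.prod_univ_castSucc]

theorem fnnwg_closed_form (Λ : ℕ) (hΛ : 0 < Λ) (n : ℕ)
    (L : Fin (n+1) → FNNN) (ω : Fin (n+1) → ℝ)
    (hη : ∀ i, 0 < (L i).eta) (hξ : ∀ i, 0 < (L i).xi)
    (hT : ∀ i, (L i).T ∈ Set.Icc (0:ℝ) 1) (hI : ∀ i, (L i).I ∈ Set.Icc (0:ℝ) 1)
    (hF : ∀ i, (L i).F ∈ Set.Icc (0:ℝ) 1)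
    (hω : ∀ i, 0 ≤ ω i) (hωs : ∑ i, ω i = 1) :
    (List.ofFn (fun i : Fin n => FNNN.wpow Λ (ω i.succ) (L i.succ))).foldl
        (FNNN.mul Λ) (FNNN.wpow Λ (ω 0) (L 0))
      = ⟨∏ i, (L i).eta ^ (ω i), ∏ i, (L i).xi ^ (ω i),
          ∏ i, (L i).T ^ (ω i),
          (1 - ∏ i, (1 - (L i).I ^ Λ) ^ (ω i)) ^ (1 / (Λ:ℝ)),
          (1 - ∏ i, (1 - (L i).F ^ (3*Λ)) ^ (ω i)) ^ (1 / (3 * (Λ:ℝ)))⟩ := by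
  exact fnnwg_aux Λ hΛ n L ω hI hF hω
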